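/- Suppose Ã(t) and Ã(t′) commute for all t, t′ in [a,b] (Ã continuous matrix-valued). Then Θ(t−s)·I + ∑_{n=1}^∞ (Θ ★ A^{★n})(t,s) = exp(∫ₛᵗ Ã(τ)dτ)·Θ(t−s), where A(t,s) = Ã(t)Θ(t−s). -/

import Mathlib

set_option maxHeartbeats 1000000
set_option synthInstance.maxHeartbeats 400000

open MeasureTheory Set

/-- Heaviside function: `Θ x = 1` if `x ≥ 0`, else `0`. -/
noncomputable def Heaviside (x : ℝ) : ℝ := if 0 ≤ x then 1 else 0

/-- Operators on `ℂ^N`, formalizing `N × N` complex matrices. -/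
abbrev MatN (N : ℕ) := (Fin N → ℂ) →L[ℂ] (Fin N → ℂ)

/-- The matrix `★`-product of two matrix kernels on `[a,b]²`. -/
noncomputable def mStarProd {N : ℕ} (a b : ℝ) (G H : ℝ → ℝ → MatN N) : ℝ → ℝ → MatN N :=
  fun t s => ∫ τ in a..b, G t τ * H τ s

/-- `mStarPow a b A n` is the `(n+1)`-st `★`-power `A^{★(n+1)}`. -/
noncomputable def mStarPow {N : ℕ} (a b : ℝ) (A : ℝ → ℝ → MatN N) : ℕ → ℝ → ℝ → MatN N
  | 0 => A
  | n + 1 => mStarProd a b A (mStarPow a b A n)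

/-- The Heaviside kernel times the identity matrix. -/
noncomputable def thetaI (N : ℕ) : ℝ → ℝ → MatN N := fun t s => Heaviside (t - s) • 1

instance matN_isScalarTower {N : ℕ} : IsScalarTower ℂ (MatN N) (MatN N) :=
  ⟨fun c x y => by
    ext v
    simp [smul_eq_mul, ContinuousLinearMap.mul_apply]⟩

instance matN_smulCommClass {N : ℕ} : SMulCommClass ℂ (MatN N) (MatN N) :=
  ⟨fun c x y => by
    ext v
    simp [smul_eq_mul, ContinuousLinearMap.mul_apply]⟩

lemma rsmul {N : ℕ} (r : ℝ) (x : MatN N) : r • x = (r : ℂ) • x :=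
  (algebraMap_smul ℂ r x).symm

lemma Heaviside_of_nonneg {x : ℝ} (h : 0 ≤ x) : Heaviside x = 1 := if_pos h

lemma Heaviside_of_neg {x : ℝ} (h : x < 0) : Heaviside x = 0 := if_neg (not_le.mpr h)

lemma heaviside_indicator {N : ℕ} (s t : ℝ) (g : ℝ → MatN N) (τ : ℝ) :
    (Heaviside (t - τ) * Heaviside (τ - s)) • g τ = (Icc s t).indicator g τ := by
  by_cases hmem : τ ∈ Icc s t
  · obtain ⟨h2, h1⟩ := hmem
    rw [indicator_of_mem (mem_Icc.mpr ⟨h2, h1⟩), Heaviside_of_nonneg (show (0:ℝ) ≤ t - τ by linarith),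
      Heaviside_of_nonneg (show (0:ℝ) ≤ τ - s by linarith), one_mul]
    exact one_smul ℝ (g τ)
  · rw [indicator_of_notMem hmem]
    rw [mem_Icc, not_and_or] at hmem
    push_neg at hmem
    rcases hmem with h | h
    · rw [Heaviside_of_neg (show τ - s < 0 by linarith), mul_zero]
      exact zero_smul ℝ (g τ)
    · rw [Heaviside_of_neg (show t - τ < 0 by linarith), zero_mul]
      exact zero_smul ℝ (g τ)

/-- Key truncation lemma: integrating a kernel against two Heaviside cutoffs over `[a,b]`
reduces to an interval integral from `s` to `t`. -/
lemma integral_heaviside_trunc {N : ℕ} {a b : ℝ} (hab : a ≤ b) {s t : ℝ}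
    (hs : s ∈ Icc a b) (ht : t ∈ Icc a b) (g : ℝ → MatN N)
    (hg : ContinuousOn g (Icc a b)) :
    (∫ τ in a..b, (Heaviside (t - τ) * Heaviside (τ - s)) • g τ)
      = Heaviside (t - s) • ∫ τ in s..t, g τ := by
  rcases lt_or_ge t s with hts | hst
  · have h0 : ∀ τ : ℝ, (Heaviside (t - τ) * Heaviside (τ - s)) • g τ = 0 := by
      intro τ
      rcases lt_or_ge τ s with h | h
      · rw [Heaviside_of_neg (show τ - s < 0 by linarith), mul_zero]
        exact zero_smul ℝ (g τ)
      · rw [Heaviside_of_neg (show t - τ < 0 by linarith), zero_mul]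
        exact zero_smul ℝ (g τ)
    rw [Heaviside_of_neg (show t - s < 0 by linarith)]
    simp only [h0, intervalIntegral.integral_zero]
    exact (zero_smul ℝ (∫ τ in s..t, g τ)).symm
  · -- s ≤ t
    have hgi : IntervalIntegrable g volume a b := by
      have hg' : ContinuousOn g (uIcc a b) := by rwa [uIcc_of_le hab]
      exact hg'.intervalIntegrable
    have hfeq : (fun τ => (Heaviside (t - τ) * Heaviside (τ - s)) • g τ)
        = (Icc s t).indicator g := by
      funext τ; exact heaviside_indicator s t g τ
    have hfi : IntervalIntegrable
        (fun τ => (Heaviside (t - τ) * Heaviside (τ - s)) • g τ) volume a b := by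
      rw [hfeq]
      exact ⟨hgi.1.indicator measurableSet_Icc, hgi.2.indicator measurableSet_Icc⟩
    have hsmem : s ∈ uIcc a b := by rwa [uIcc_of_le hab]
    have htmem : t ∈ uIcc a b := by rwa [uIcc_of_le hab]
    have h1 : IntervalIntegrable
        (fun τ => (Heaviside (t - τ) * Heaviside (τ - s)) • g τ) volume a s :=
      hfi.mono_set (uIcc_subset_uIcc left_mem_uIcc hsmem)
    have h2 : IntervalIntegrable
        (fun τ => (Heaviside (t - τ) * Heaviside (τ - s)) • g τ) volume s t :=
      hfi.mono_set (uIcc_subset_uIcc hsmem htmem)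
    have h3 : IntervalIntegrable
        (fun τ => (Heaviside (t - τ) * Heaviside (τ - s)) • g τ) volume t b :=
      hfi.mono_set (uIcc_subset_uIcc htmem right_mem_uIcc)
    have hsplit : (∫ τ in a..b, (Heaviside (t - τ) * Heaviside (τ - s)) • g τ)
        = (∫ τ in a..s, (Heaviside (t - τ) * Heaviside (τ - s)) • g τ)
          + ((∫ τ in s..t, (Heaviside (t - τ) * Heaviside (τ - s)) • g τ)
            + (∫ τ in t..b, (Heaviside (t - τ) * Heaviside (τ - s)) • g τ)) := by
      rw [intervalIntegral.integral_add_adjacent_intervals h2 h3,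
        intervalIntegral.integral_add_adjacent_intervals h1 (h2.trans h3)]
    have hz1 : (∫ τ in a..s, (Heaviside (t - τ) * Heaviside (τ - s)) • g τ) = 0 := by
      rw [show (0 : MatN N) = ∫ τ in a..s, (0 : MatN N) by simp]
      apply intervalIntegral.integral_congr_ae
      filter_upwards [compl_mem_ae_iff.mpr (Real.volume_singleton (a := s))] with τ hτ hmem
      have hτs : τ ≠ s := hτ
      rcases Set.mem_uIoc.mp hmem with ⟨_, h⟩ | ⟨h, h'⟩
      · have hlt : τ < s := lt_of_le_of_ne h hτs
        rw [Heaviside_of_neg (show τ - s < 0 by linarith), mul_zero]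
        exact zero_smul ℝ (g τ)
      · exact absurd (lt_of_lt_of_le h (le_trans h' hs.1)) (lt_irrefl _)
    have hz3 : (∫ τ in t..b, (Heaviside (t - τ) * Heaviside (τ - s)) • g τ) = 0 := by
      rw [show (0 : MatN N) = ∫ τ in t..b, (0 : MatN N) by simp]
      apply intervalIntegral.integral_congr_ae
      filter_upwards with τ hmem
      rcases Set.mem_uIoc.mp hmem with ⟨h, _⟩ | ⟨hb, h⟩
      · rw [Heaviside_of_neg (show t - τ < 0 by linarith), zero_mul]
        exact zero_smul ℝ (g τ)
      · exact absurd (lt_of_le_of_lt h (lt_of_le_of_lt ht.2 hb)) (lt_irrefl _)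
    have hmid : (∫ τ in s..t, (Heaviside (t - τ) * Heaviside (τ - s)) • g τ)
        = ∫ τ in s..t, g τ := by
      apply intervalIntegral.integral_congr_ae
      filter_upwards with τ hmem
      rcases Set.mem_uIoc.mp hmem with ⟨h1', h2'⟩ | ⟨h1', h2'⟩
      · rw [Heaviside_of_nonneg (show 0 ≤ t - τ by linarith),
          Heaviside_of_nonneg (show 0 ≤ τ - s by linarith), one_mul]
        exact one_smul ℝ (g τ)
      · exact absurd (lt_of_lt_of_le h1' (le_trans h2' hst)) (lt_irrefl _)
    rw [hsplit, hz1, hz3, hmid, Heaviside_of_nonneg (show 0 ≤ t - s by linarith)]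
    rw [zero_add, add_zero]
    exact (one_smul ℝ _).symm

/-- If `Ã(t)` and `Ã(t')` commute for all `t, t' ∈ [a,b]`, then
`Θ(t-s) I + ∑_{n≥1} (Θ ★ A^{★n})(t,s) = exp(∫_s^t Ã(τ) dτ) Θ(t-s)`, where
`A(t,s) = Ã(t)Θ(t-s)` and `exp` is the matrix exponential
(here `mStarPow a b A n = A^{★(n+1)}`). -/
theorem dyson_series_eq_exp_of_commute {N : ℕ} (a b : ℝ) (hab : a ≤ b)
    (At : ℝ → MatN N) (hcont : ContinuousOn At (Icc a b))
    (hcomm : ∀ t ∈ Icc a b, ∀ t' ∈ Icc a b, At t * At t' = At t' * At t)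
    (A : ℝ → ℝ → MatN N) (hA : ∀ t s, A t s = Heaviside (t - s) • At t) :
    ∀ t ∈ Icc a b, ∀ s ∈ Icc a b,
      Heaviside (t - s) • (1 : MatN N)
          + ∑' n : ℕ, mStarProd a b (thetaI N) (mStarPow a b A n) t s
        = Heaviside (t - s) • NormedSpace.exp (∫ τ in s..t, At τ) := by
  -- extend `At` to a continuous function on all of `ℝ` with pairwise commuting values
  set B : ℝ → MatN N := fun τ => At ((Set.projIcc a b hab τ) : ℝ) with hBdef
  have hBeq : ∀ τ ∈ Icc a b, B τ = At τ := by
    intro τ hτ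
    simp [hBdef, Set.projIcc_of_mem hab hτ]
  have hB : Continuous B :=
    hcont.comp_continuous (continuous_subtype_val.comp continuous_projIcc)
      (fun τ => (Set.projIcc a b hab τ).2)
  have hBc : ∀ u v : ℝ, B u * B v = B v * B u := fun u v =>
    hcomm _ (Set.projIcc a b hab u).2 _ (Set.projIcc a b hab v).2
  set F : ℝ → ℝ → MatN N := fun s t => ∫ τ in s..t, B τ with hFdef
  have hFcont : ∀ s, Continuous (F s) := fun s =>
    intervalIntegral.continuous_primitive (fun u v => hB.intervalIntegrable u v) s
  have hFderiv : ∀ s u : ℝ, HasDerivAt (F s) (B u) u := fun s u =>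
    intervalIntegral.integral_hasDerivAt_right (hB.intervalIntegrable s u)
      (hB.stronglyMeasurable.stronglyMeasurableAtFilter) hB.continuousAt
  have hcommF : ∀ (u s t : ℝ), Commute (B u) (F s t) := by
    intro u s t
    unfold Commute SemiconjBy
    have hL : B u * F s t = ∫ τ in s..t, B u * B τ := by
      rw [show (fun τ => B u * B τ) = fun τ => (ContinuousLinearMap.mul ℂ (MatN N) (B u)) (B τ)
        from rfl, ContinuousLinearMap.intervalIntegral_comp_comm _ (hB.intervalIntegrable s t)]
      rfl
    have hR : F s t * B u = ∫ τ in s..t, B τ * B u := by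
      rw [show (fun τ => B τ * B u)
          = fun τ => ((ContinuousLinearMap.mul ℂ (MatN N)).flip (B u)) (B τ) from rfl,
        ContinuousLinearMap.intervalIntegral_comp_comm _ (hB.intervalIntegrable s t)]
      rfl
    rw [hL, hR]
    exact intervalIntegral.integral_congr fun τ _ => hBc u τ
  -- derivative of powers of the primitive
  have hpowderiv : ∀ (s : ℝ) (k : ℕ) (u : ℝ),
      HasDerivAt (fun v => F s v ^ (k + 1)) (((k : ℂ) + 1) • (B u * F s u ^ k)) u := by
    intro s k
    induction k with
    | zero =>
      intro u
      have := hFderiv s u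
      have heq : (fun v => F s v ^ (0 + 1)) = F s := by funext v; simp
      rw [heq]
      simpa using this
    | succ k ih =>
      intro u
      have h := (ih u).mul (hFderiv s u)
      have heq : (fun v => F s v ^ (k + 1) * F s v) = fun v => F s v ^ (k + 1 + 1) := by
        funext v; rw [← pow_succ]
      rw [show ((fun v => F s v ^ (k + 1)) * F s) = fun v => F s v ^ (k + 1 + 1) from heq] at h
      refine HasDerivAt.congr_deriv h (Eq.symm ?_)
      have hcomm' : F s u ^ (k + 1) * B u = B u * F s u ^ (k + 1) :=
        (((hcommF u s u).pow_right (k + 1)).eq).symm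
      rw [hcomm', smul_mul_assoc, mul_assoc, ← pow_succ]
      push_cast
      refine (add_smul ((k : ℂ) + 1) 1 (B u * F s u ^ (k + 1))).trans ?_
      congr 1
      exact one_smul ℂ _
  -- the fundamental integral identity
  have hint : ∀ (s t : ℝ) (k : ℕ),
      (∫ u in s..t, B u * F s u ^ k) = ((k : ℂ) + 1)⁻¹ • F s t ^ (k + 1) := by
    intro s t k
    have hd : ∀ u : ℝ, HasDerivAt (fun v => ((k : ℂ) + 1)⁻¹ • F s v ^ (k + 1))
        (B u * F s u ^ k) u := by
      intro u
      have : HasDerivAt (fun v => ((k : ℂ) + 1)⁻¹ • F s v ^ (k + 1)) _ u :=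
        (hpowderiv s k u).const_smul (((k : ℂ) + 1)⁻¹)
      have hne : ((k : ℂ) + 1) ≠ 0 := Nat.cast_add_one_ne_zero k
      simpa [smul_smul, inv_mul_cancel₀ hne] using this
    have hci : IntervalIntegrable (fun u => B u * F s u ^ k) volume s t :=
      (hB.mul ((hFcont s).pow k)).intervalIntegrable s t
    rw [intervalIntegral.integral_eq_sub_of_hasDerivAt (fun u _ => hd u) hci]
    have hzz : F s s = 0 := intervalIntegral.integral_same
    have h1 : ((k : ℂ) + 1)⁻¹ • (0 : MatN N) = 0 := by ext v; simp
    rw [hzz, zero_pow (Nat.succ_ne_zero k), h1, sub_zero]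
  -- the closed form for `★`-powers of `A`
  have hpow : ∀ n : ℕ, ∀ t ∈ Icc a b, ∀ s ∈ Icc a b,
      mStarPow a b A n t s
        = Heaviside (t - s) • (B t * (((n.factorial : ℂ))⁻¹ • F s t ^ n)) := by
    intro n
    induction n with
    | zero =>
      intro t ht s hs
      simp [mStarPow, hA, hBeq t ht]
    | succ n ih =>
      intro t ht s hs
      show mStarProd a b A (mStarPow a b A n) t s = _
      rw [mStarProd]
      have hstep : (∫ τ in a..b, A t τ * mStarPow a b A n τ s)
          = ∫ τ in a..b, (Heaviside (t - τ) * Heaviside (τ - s)) •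
              (At t * (B τ * (((n.factorial : ℂ))⁻¹ • F s τ ^ n))) := by
        apply intervalIntegral.integral_congr
        intro τ hτ
        rw [uIcc_of_le hab] at hτ
        beta_reduce
        rw [hA, ih τ hτ s hs, rsmul (Heaviside (t - τ)), rsmul (Heaviside (τ - s)),
          smul_mul_assoc, mul_smul_comm, smul_smul, ← Complex.ofReal_mul, ← rsmul]
      rw [hstep, integral_heaviside_trunc hab hs ht
        (fun τ => At t * (B τ * (((n.factorial : ℂ))⁻¹ • F s τ ^ n)))
        (Continuous.continuousOn (by have := hFcont s; fun_prop))]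
      have hpull : (∫ τ in s..t, At t * (B τ * (((n.factorial : ℂ))⁻¹ • F s τ ^ n)))
          = At t * ∫ τ in s..t, B τ * (((n.factorial : ℂ))⁻¹ • F s τ ^ n) := by
        rw [show (fun τ => At t * (B τ * (((n.factorial : ℂ))⁻¹ • F s τ ^ n)))
            = fun τ => (ContinuousLinearMap.mul ℂ (MatN N) (At t))
                (B τ * (((n.factorial : ℂ))⁻¹ • F s τ ^ n)) from rfl,
          ContinuousLinearMap.intervalIntegral_comp_comm
            (f := fun τ => B τ * (((n.factorial : ℂ))⁻¹ • F s τ ^ n)) _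
            (Continuous.intervalIntegrable (by have := hFcont s; fun_prop) s t)]
        rfl
      have hinner : (∫ τ in s..t, B τ * (((n.factorial : ℂ))⁻¹ • F s τ ^ n))
          = ((n.factorial : ℂ))⁻¹ • ∫ τ in s..t, B τ * F s τ ^ n := by
        rw [show (fun τ => B τ * (((n.factorial : ℂ))⁻¹ • F s τ ^ n))
            = fun τ => ((n.factorial : ℂ))⁻¹ • (B τ * F s τ ^ n) by
          funext τ; rw [mul_smul_comm]]
        exact intervalIntegral.integral_smul _ _
      rw [hpull, hinner, hint s t n, hBeq t ht]
      congr 1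
      rw [smul_smul]
      congr 1
      rw [Nat.factorial_succ]
      push_cast
      rw [mul_inv]
      ring_nf
  -- the closed form for `Θ ★ A^{★(n+1)}`
  have hC : ∀ n : ℕ, ∀ t ∈ Icc a b, ∀ s ∈ Icc a b,
      mStarProd a b (thetaI N) (mStarPow a b A n) t s
        = Heaviside (t - s) • ((((n + 1).factorial : ℂ))⁻¹ • F s t ^ (n + 1)) := by
    intro n t ht s hs
    rw [mStarProd]
    have hstep : (∫ τ in a..b, thetaI N t τ * mStarPow a b A n τ s)
        = ∫ τ in a..b, (Heaviside (t - τ) * Heaviside (τ - s)) •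
            (B τ * (((n.factorial : ℂ))⁻¹ • F s τ ^ n)) := by
      apply intervalIntegral.integral_congr
      intro τ hτ
      rw [uIcc_of_le hab] at hτ
      beta_reduce
      simp only [thetaI]
      rw [hpow n τ hτ s hs, rsmul (Heaviside (t - τ)), rsmul (Heaviside (τ - s)),
        smul_mul_assoc, one_mul, mul_smul_comm, smul_smul, ← Complex.ofReal_mul, ← rsmul]
    rw [hstep, integral_heaviside_trunc hab hs ht
      (fun τ => B τ * (((n.factorial : ℂ))⁻¹ • F s τ ^ n))
      (Continuous.continuousOn (by have := hFcont s; fun_prop))]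
    have hinner : (∫ τ in s..t, B τ * (((n.factorial : ℂ))⁻¹ • F s τ ^ n))
        = ((n.factorial : ℂ))⁻¹ • ∫ τ in s..t, B τ * F s τ ^ n := by
      rw [show (fun τ => B τ * (((n.factorial : ℂ))⁻¹ • F s τ ^ n))
          = fun τ => ((n.factorial : ℂ))⁻¹ • (B τ * F s τ ^ n) by
        funext τ; rw [mul_smul_comm]]
      exact intervalIntegral.integral_smul _ _
    rw [hinner, hint s t n]
    congr 1
    rw [smul_smul]
    congr 1
    rw [Nat.factorial_succ]
    push_cast
    rw [mul_inv]
    ring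
  -- assemble
  intro t ht s hs
  have hX : (∫ τ in s..t, At τ) = F s t := by
    apply intervalIntegral.integral_congr
    intro τ hτ
    have hτ' : τ ∈ Icc a b := by
      rcases hτ with ⟨h1, h2⟩
      constructor
      · exact le_trans (le_min hs.1 ht.1) h1
      · exact le_trans h2 (max_le hs.2 ht.2)
    exact (hBeq τ hτ').symm
  rw [hX, tsum_congr (fun n => hC n t ht s hs)]
  have hsum : Summable (fun n : ℕ => ((n.factorial : ℂ))⁻¹ • F s t ^ n) :=
    NormedSpace.expSeries_summable' (F s t)
  have hexp : NormedSpace.exp (F s t) = ∑' n : ℕ, ((n.factorial : ℂ))⁻¹ • F s t ^ n := by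
    rw [NormedSpace.exp_eq_tsum (𝕂 := ℂ)]
  have hshift : (∑' n : ℕ, (((n + 1).factorial : ℂ))⁻¹ • F s t ^ (n + 1))
      = NormedSpace.exp (F s t) - 1 := by
    have h0 := Summable.tsum_eq_zero_add hsum
    simp only [Nat.factorial_zero, Nat.cast_one, inv_one, pow_zero] at h0
    have ha0 : (1 : ℂ) • (1 : MatN N) = 1 := by ext v; simp
    rw [ha0] at h0
    rw [hexp, h0]
    abel
  have hsum' : Summable (fun n : ℕ => (((n + 1).factorial : ℂ))⁻¹ • F s t ^ (n + 1)) :=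
    (summable_nat_add_iff 1).mpr hsum
  rw [show (fun n : ℕ => Heaviside (t - s) • ((((n + 1).factorial : ℂ))⁻¹ • F s t ^ (n + 1)))
      = fun n : ℕ => ((Heaviside (t - s) : ℂ)) • ((fun m : ℕ =>
          (((m + 1).factorial : ℂ))⁻¹ • F s t ^ (m + 1)) n) by
    funext n; rw [rsmul],
    Summable.tsum_const_smul _ hsum', hshift,
    rsmul (Heaviside (t - s)) (1 : MatN N),
    rsmul (Heaviside (t - s)) (NormedSpace.exp (F s t))]
  ext v i
  simp only [ContinuousLinearMap.add_apply, ContinuousLinearMap.smul_apply,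
    ContinuousLinearMap.sub_apply, ContinuousLinearMap.one_apply, Pi.add_apply,
    Pi.sub_apply, Pi.smul_apply, smul_eq_mul]
  ring
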